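/- arXiv:2009.11626 — 3 statements merged into one kernel-verified Lean document; each statement's English description precedes it below -/
import Mathlib

section
/- The one-dimensional fractional Laplacian of the function v(t) = (t)_+^s, evaluated at points t < 0, equals -\frac{\Gamma(1+s)}{\Gamma(1-s)} (−t)^{-s}. That is, $(-\Delta)^s (x)_+^s = -\frac{\Gamma(1+s)}{\Gamma(1-s)}\, (x)_-^{-s}$ for $x<0$. -/
open MeasureTheory Real

section aux
open Set

private lemma real_beta_aux {u v : ℝ} (hu : 0 < u) (hv : 0 < v) :
    ∫ x in (0:ℝ)..1, x ^ (u - 1) * (1 - x) ^ (v - 1)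
      = Gamma u * Gamma v / Gamma (u + v) := by
  have key := Complex.Gamma_mul_Gamma_eq_betaIntegral (s := (u:ℂ)) (t := (v:ℂ))
    (by simpa using hu) (by simpa using hv)
  have hbeta : Complex.betaIntegral u v
      = ((∫ x in (0:ℝ)..1, x ^ (u - 1) * (1 - x) ^ (v - 1) : ℝ) : ℂ) := by
    rw [Complex.betaIntegral, ← intervalIntegral.integral_ofReal]
    refine intervalIntegral.integral_congr fun x hx => ?_
    rw [uIcc_of_le (by norm_num : (0:ℝ) ≤ 1)] at hx
    rw [Complex.ofReal_mul, Complex.ofReal_cpow hx.1,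
      Complex.ofReal_cpow (by linarith [hx.2] : (0:ℝ) ≤ 1 - x)]
    push_cast
    ring
  rw [hbeta, Complex.Gamma_ofReal, Complex.Gamma_ofReal, ← Complex.ofReal_add,
    Complex.Gamma_ofReal, ← Complex.ofReal_mul, ← Complex.ofReal_mul] at key
  have h2 := Complex.ofReal_inj.mp key
  have hG : Gamma (u + v) ≠ 0 := (Gamma_pos_of_pos (by linarith)).ne'
  field_simp
  linarith [h2]

private lemma beta_Ioi_aux {u v : ℝ} (hu : 0 < u) (hv : 0 < v) :
    ∫ t in Ioi (0:ℝ), t ^ (u - 1) * (1 + t) ^ (-(u + v))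
      = Gamma u * Gamma v / Gamma (u + v) := by
  rw [← real_beta_aux hu hv]
  have himg : (fun x : ℝ => x / (1 - x)) '' Ioo 0 1 = Ioi 0 := by
    ext t
    constructor
    · rintro ⟨x, ⟨hx0, hx1⟩, rfl⟩
      exact div_pos hx0 (by linarith)
    · intro ht
      have ht' : 0 < t := ht
      refine ⟨t / (1 + t), ⟨div_pos ht' (by linarith), ?_⟩, ?_⟩
      · rw [div_lt_one (by linarith)]; linarith
      · have h1t : (1:ℝ) + t ≠ 0 := by positivity
        field_simp
        ring
  have hderiv : ∀ x ∈ Ioo (0:ℝ) 1, HasDerivWithinAt (fun x : ℝ => x / (1 - x))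
      (1 / (1 - x) ^ 2) (Ioo 0 1) x := by
    intro x hx
    have h1x : (1:ℝ) - x ≠ 0 := by simp only [mem_Ioo] at hx; intro h; linarith [hx.2]
    have := (hasDerivAt_id x).div ((hasDerivAt_id x).const_sub 1) h1x
    convert this.hasDerivWithinAt using 1
    · rfl
    · rfl
    · rfl
    · simp only [id]; ring
  have hinj : InjOn (fun x : ℝ => x / (1 - x)) (Ioo 0 1) := by
    intro a ha b hb hab
    simp only [mem_Ioo] at ha hb
    have h1 : (1:ℝ) - a ≠ 0 := by intro h; linarith [ha.2]
    have h2 : (1:ℝ) - b ≠ 0 := by intro h; linarith [hb.2]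
    field_simp at hab
    nlinarith [hab]
  have key := integral_image_eq_integral_abs_deriv_smul measurableSet_Ioo hderiv hinj
    (fun t : ℝ => t ^ (u - 1) * (1 + t) ^ (-(u + v)))
  rw [himg] at key
  rw [key, intervalIntegral.integral_of_le (by norm_num : (0:ℝ) ≤ 1),
    integral_Ioc_eq_integral_Ioo]
  refine setIntegral_congr_fun measurableSet_Ioo fun x hx => ?_
  simp only [mem_Ioo] at hx
  have hx0 : 0 < x := hx.1
  have h1x : 0 < 1 - x := by linarith [hx.2]
  have h1 : (1:ℝ) + x / (1 - x) = 1 / (1 - x) := by field_simp; ring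
  rw [smul_eq_mul, h1, abs_of_pos (by positivity)]
  rw [show (1:ℝ) / (1 - x) ^ 2 = (1 - x) ^ (-((2:ℕ):ℝ)) by
    rw [rpow_neg h1x.le, rpow_natCast, one_div]]
  rw [div_rpow hx0.le h1x.le, one_div, inv_rpow h1x.le, ← rpow_neg h1x.le, neg_neg,
    div_eq_mul_inv, ← rpow_neg h1x.le]
  rw [show (1-x) ^ (-((2:ℕ):ℝ)) * (x ^ (u-1) * (1-x) ^ (-(u-1)) * (1-x) ^ (u+v))
      = x ^ (u-1) * ((1-x) ^ (-((2:ℕ):ℝ)) * ((1-x) ^ (-(u-1)) * (1-x) ^ (u+v))) by ring,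
    ← rpow_add h1x, ← rpow_add h1x]
  norm_num
  left
  ring

private lemma gamma_const_aux (s : ℝ) (hs : 0 < s) (hs1 : s < 1) :
    s * 2 ^ (2 * s) * Gamma ((1 + 2 * s) / 2) / (π ^ ((1:ℝ) / 2) * Gamma (1 - s)) *
      (Gamma (1 + s) * Gamma s / Gamma (1 + 2 * s)) = Gamma (1 + s) / Gamma (1 - s) := by
  have hdup := Real.Gamma_mul_Gamma_add_half s
  have h2pow : (2:ℝ) ^ (2 * s) * 2 ^ (1 - 2 * s) = 2 := by
    rw [← rpow_add two_pos]; norm_num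
  have h1 : (1 + 2 * s) / 2 = s + 1 / 2 := by ring
  have h2 : Gamma (1 + 2 * s) = 2 * s * Gamma (2 * s) := by
    rw [show 1 + 2 * s = 2 * s + 1 by ring, Gamma_add_one (by positivity)]
  have hpi : π ^ ((1:ℝ) / 2) = √π := (sqrt_eq_rpow π).symm
  have hY : Gamma (1 - s) ≠ 0 := (Gamma_pos_of_pos (by linarith)).ne'
  have hT : Gamma (2 * s) ≠ 0 := (Gamma_pos_of_pos (by linarith)).ne'
  have hP : √π ≠ 0 := by positivity
  rw [h1, h2, hpi, div_mul_div_comm, div_eq_div_iff (by positivity) hY]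
  linear_combination (s * 2 ^ (2*s) * Gamma (1+s) * Gamma (1-s)) * hdup
    + (s * Gamma (1+s) * Gamma (1-s) * √π * Gamma (2*s)) * h2pow
/-- The one-dimensional fractional Laplacian of `v(t) = (t)₊^s` at a point `x < 0` equals
`-(Γ(1+s)/Γ(1-s)) (-x)^{-s}`. Since `v` vanishes on a neighborhood of `x`, the principal
value integral is an ordinary (Lebesgue) integral. -/
theorem stmt_0 (s x : ℝ) (hs : 0 < s) (hs1 : s < 1) (hx : x < 0) :
    (s * 2 ^ (2 * s) * Real.Gamma ((1 + 2 * s) / 2) / (π ^ ((1 : ℝ) / 2) * Real.Gamma (1 - s))) *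
        ∫ y : ℝ, (max x 0 ^ s - max y 0 ^ s) / |x - y| ^ (1 + 2 * s) =
      -(Real.Gamma (1 + s) / Real.Gamma (1 - s)) * (-x) ^ (-s) := by
  have hint : (∫ y : ℝ, (max x 0 ^ s - max y 0 ^ s) / |x - y| ^ (1 + 2 * s))
      = -((-x) ^ (-s) * ∫ t in Set.Ioi (0:ℝ),
          t ^ ((1+s) - 1) * (1 + t) ^ (-((1+s) + s))) := by
    set a : ℝ := -x with ha
    have ha0 : 0 < a := by simp [ha]; linarith
    have hmx : max x 0 = 0 := max_eq_right hx.le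
    have hred : ∫ y : ℝ, (max x 0 ^ s - max y 0 ^ s) / |x - y| ^ (1 + 2 * s)
        = ∫ y in Ioi (0:ℝ), (max x 0 ^ s - max y 0 ^ s) / |x - y| ^ (1 + 2 * s) := by
      refine (setIntegral_eq_integral_of_forall_compl_eq_zero fun y hy => ?_).symm
      simp only [mem_Ioi, not_lt] at hy
      rw [hmx, max_eq_right hy, zero_rpow hs.ne', sub_self, zero_div]
    rw [hred]
    have hcong : ∫ y in Ioi (0:ℝ), (max x 0 ^ s - max y 0 ^ s) / |x - y| ^ (1 + 2 * s)
        = ∫ y in Ioi (0:ℝ), -(y ^ s * (y + a) ^ (-(1 + 2 * s))) := by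
      refine setIntegral_congr_fun measurableSet_Ioi fun y hy => ?_
      have hy0 : 0 < y := hy
      rw [hmx, max_eq_left hy0.le, zero_rpow hs.ne', zero_sub,
        show |x - y| = y + a by rw [abs_of_neg (by linarith), ha]; ring,
        rpow_neg (by linarith), div_eq_mul_inv, neg_mul]
    rw [hcong, integral_neg, neg_inj]
    have hscale := integral_comp_mul_left_Ioi
      (fun y : ℝ => y ^ s * (y + a) ^ (-(1 + 2 * s))) 0 ha0
    rw [mul_zero] at hscale
    have h1 : ∫ y in Ioi (0:ℝ), y ^ s * (y + a) ^ (-(1 + 2 * s))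
        = a • ∫ t in Ioi (0:ℝ), (a * t) ^ s * (a * t + a) ^ (-(1 + 2 * s)) := by
      rw [hscale, smul_smul, mul_inv_cancel₀ ha0.ne', one_smul]
    rw [h1, smul_eq_mul, ← integral_const_mul, ← integral_const_mul]
    refine setIntegral_congr_fun measurableSet_Ioi fun t ht => ?_
    have ht0 : 0 < t := ht
    have e1 : a * t + a = a * (1 + t) := by ring
    rw [e1, mul_rpow ha0.le ht0.le, mul_rpow ha0.le (by linarith)]
    rw [show a * (a ^ s * t ^ s * (a ^ (-(1+2*s)) * (1+t) ^ (-(1+2*s))))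
        = (a ^ (1:ℝ) * a ^ s * a ^ (-(1+2*s))) * (t ^ s * (1+t) ^ (-(1+2*s))) by
          rw [rpow_one]; ring,
      ← rpow_add ha0, ← rpow_add ha0]
    norm_num
    rw [show (1:ℝ) + s + (-(2 * s) + -1) = -s by ring,
      show -s + (-s + (-1:ℝ)) = -(2 * s) + -1 by ring]
  rw [hint, beta_Ioi_aux (show (0:ℝ) < 1 + s by linarith) hs,
    show (1+s) + s = 1 + 2 * s by ring]
  have hkey := gamma_const_aux s hs hs1
  linear_combination (-((-x) ^ (-s))) * hkey
end aux
end

section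
/- For $s\in(0,1)$, the integral $\int_0^\pi (1+\cos\theta)^{2s}(\cos\theta - 1)(\sin\theta)^{1-2s}\,d\theta$ equals $-\frac{2\pi s(1-s)}{\sin(\pi s)}$. -/
open MeasureTheory Real

/-- Pointwise algebraic identity used for the substitution. -/
lemma key_identity (s a b σ : ℝ) (ha : 0 < a) (hb : 0 < b) (hσ : 0 < σ)
    (h : σ ^ 2 = a * b) :
    a ^ (2 * s) * (-b) * σ ^ (1 - 2 * s) = (-4 * ((b / 2) ^ (1 - s) * (a / 2) ^ s)) * (σ / 2) := by
  have e1 : σ ^ (1 - 2 * s) = σ * (a ^ (-s) * b ^ (-s)) := by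
    rw [show (1 - 2 * s) = 1 + (2 : ℝ) * (-s) by ring, Real.rpow_add hσ, Real.rpow_one,
      Real.rpow_mul hσ.le, show ((2 : ℝ)) = ((2 : ℕ) : ℝ) by norm_num, Real.rpow_natCast,
      h, Real.mul_rpow ha.le hb.le]
  have e2 : a ^ (2 * s) * a ^ (-s) = a ^ s := by
    rw [← Real.rpow_add ha]; ring_nf
  have e3 : b * b ^ (-s) = b ^ (1 - s) := by
    nth_rewrite 1 [show b = b ^ (1 : ℝ) by rw [Real.rpow_one]]
    rw [← Real.rpow_add hb]; ring_nf
  have e4 : (b / 2) ^ (1 - s) = b ^ (1 - s) / 2 ^ (1 - s) :=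
    Real.div_rpow hb.le (by norm_num) _
  have e5 : (a / 2) ^ s = a ^ s / 2 ^ s := Real.div_rpow ha.le (by norm_num) _
  have e6 : (2 : ℝ) ^ (1 - s) * 2 ^ s = 2 := by
    rw [← Real.rpow_add (by norm_num : (0:ℝ) < 2)]
    norm_num
  have h2s : (0:ℝ) < 2 ^ s := Real.rpow_pos_of_pos (by norm_num) _
  have h2s' : (0:ℝ) < 2 ^ (1 - s) := Real.rpow_pos_of_pos (by norm_num) _
  rw [e1, e4, e5]
  rw [div_mul_div_comm, e6, ← e2, ← e3]
  ring

/-- The Beta integral `∫_0^1 t^(1-s) (1-t)^s dt` for `0 < s < 1`. -/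
lemma beta_val (s : ℝ) (hs : 0 < s) (hs1 : s < 1) :
    ∫ t in (0:ℝ)..1, t ^ (1 - s) * (1 - t) ^ s = π * s * (1 - s) / (2 * Real.sin (π * s)) := by
  have h2s : (0:ℝ) < (2 : ℂ).re - s := by simp; linarith
  have hG := Complex.Gamma_mul_Gamma_eq_betaIntegral
    (s := (2 : ℂ) - s) (t := (1 : ℂ) + s) (by simp; linarith) (by simp; linarith)
  have hbeta : Complex.betaIntegral ((2 : ℂ) - s) ((1 : ℂ) + s)
      = ((∫ t in (0:ℝ)..1, t ^ (1 - s) * (1 - t) ^ s : ℝ) : ℂ) := by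
    rw [Complex.betaIntegral, ← intervalIntegral.integral_ofReal]
    apply intervalIntegral.integral_congr
    intro x hx
    rw [Set.uIcc_of_le (by norm_num : (0:ℝ) ≤ 1)] at hx
    have hx0 : (0:ℝ) ≤ x := hx.1
    have hx1 : (0:ℝ) ≤ 1 - x := by linarith [hx.2]
    show (x:ℂ) ^ ((2:ℂ) - s - 1) * ((1:ℂ) - x) ^ ((1:ℂ) + s - 1)
        = ((x ^ (1 - s) * (1 - x) ^ s : ℝ) : ℂ)
    rw [show ((1:ℂ) - (x:ℝ)) = ((1 - x : ℝ) : ℂ) by push_cast; ring,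
      show (2:ℂ) - (s:ℝ) - 1 = ((1 - s : ℝ) : ℂ) by push_cast; ring,
      show (1:ℂ) + (s:ℝ) - 1 = ((s : ℝ) : ℂ) by push_cast; ring,
      ← Complex.ofReal_cpow hx0, ← Complex.ofReal_cpow hx1, ← Complex.ofReal_mul]
  have hGam3 : Complex.Gamma ((2 : ℂ) - s + ((1 : ℂ) + s)) = 2 := by
    have : (2 : ℂ) - s + ((1 : ℂ) + s) = ((3 : ℝ) : ℂ) := by push_cast; ring
    rw [this, Complex.Gamma_ofReal]
    have : Real.Gamma 3 = 2 := by
      rw [show (3:ℝ) = 2 + 1 by norm_num, Real.Gamma_add_one (by norm_num), Real.Gamma_two]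
      norm_num
    rw [this]; norm_num
  rw [hbeta, hGam3] at hG
  have hc1 : (2 : ℂ) - s = ((2 - s : ℝ) : ℂ) := by push_cast; ring
  have hc2 : (1 : ℂ) + s = ((1 + s : ℝ) : ℂ) := by push_cast; ring
  rw [hc1, hc2, Complex.Gamma_ofReal, Complex.Gamma_ofReal] at hG
  have hreal : Real.Gamma (2 - s) * Real.Gamma (1 + s)
      = 2 * ∫ t in (0:ℝ)..1, t ^ (1 - s) * (1 - t) ^ s := by
    have := hG
    rw [← Complex.ofReal_mul] at this
    exact_mod_cast this
  have hG1 : Real.Gamma (2 - s) = (1 - s) * Real.Gamma (1 - s) := by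
    rw [show (2 - s : ℝ) = (1 - s) + 1 by ring, Real.Gamma_add_one (by linarith)]
  have hG2 : Real.Gamma (1 + s) = s * Real.Gamma s := by
    rw [show (1 + s : ℝ) = s + 1 by ring, Real.Gamma_add_one (by linarith)]
  have hrefl : Real.Gamma s * Real.Gamma (1 - s) = π / Real.sin (π * s) :=
    Real.Gamma_mul_Gamma_one_sub s
  have hsin : Real.sin (π * s) ≠ 0 := by
    have : 0 < Real.sin (π * s) :=
      Real.sin_pos_of_pos_of_lt_pi (by positivity) (by nlinarith [Real.pi_pos])
    linarith
  rw [hG1, hG2] at hreal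
  have : (1 - s) * (s * (π / Real.sin (π * s)))
      = 2 * ∫ t in (0:ℝ)..1, t ^ (1 - s) * (1 - t) ^ s := by
    rw [← hrefl]; rw [← hreal]; ring
  field_simp at this ⊢
  linarith

/-- For `s ∈ (0,1)`,
`∫_0^π (1+cos θ)^{2s} (cos θ - 1) (sin θ)^{1-2s} dθ = -2π s(1-s)/sin(πs)`. -/
theorem stmt_9 (s : ℝ) (hs : 0 < s) (hs1 : s < 1) :
    ∫ θ in Set.Ioo (0 : ℝ) π,
        (1 + Real.cos θ) ^ (2 * s) * (Real.cos θ - 1) * (Real.sin θ) ^ (1 - 2 * s) =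
      -(2 * π * s * (1 - s) / Real.sin (π * s)) := by
  set f : ℝ → ℝ := fun θ => (1 - Real.cos θ) / 2 with hf
  set f' : ℝ → ℝ := fun θ => Real.sin θ / 2 with hf'
  set g : ℝ → ℝ := fun t => -4 * (t ^ (1 - s) * (1 - t) ^ s) with hgdef
  have hg_cont : Continuous g := by
    have h1 : Continuous fun t : ℝ => t ^ (1 - s) :=
      continuous_iff_continuousAt.2 fun x =>
        Real.continuousAt_rpow_const x _ (Or.inr (by linarith))
    have h2 : Continuous fun t : ℝ => (1 - t) ^ s :=
      (continuous_iff_continuousAt.2 fun x =>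
        Real.continuousAt_rpow_const x _ (Or.inr hs.le)).comp (by continuity)
    exact continuous_const.mul (h1.mul h2)
  have hderiv : ∀ x ∈ Set.uIcc (0:ℝ) π, HasDerivAt f (f' x) x := by
    intro x _
    have : HasDerivAt (fun θ => (1 - Real.cos θ) / 2) (-(-Real.sin x) / 2) x :=
      ((Real.hasDerivAt_cos x).const_sub 1).div_const 2
    simpa [f, f'] using this
  have hf'_cont : ContinuousOn f' (Set.uIcc (0:ℝ) π) :=
    (Real.continuous_sin.div_const 2).continuousOn
  have hEq : ∀ θ ∈ Set.Ioo (0:ℝ) π,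
      (1 + Real.cos θ) ^ (2 * s) * (Real.cos θ - 1) * (Real.sin θ) ^ (1 - 2 * s)
        = (g ∘ f) θ * f' θ := by
    intro θ hθ
    have hsin : 0 < Real.sin θ := Real.sin_pos_of_pos_of_lt_pi hθ.1 hθ.2
    have hsq : Real.sin θ ^ 2 = (1 + Real.cos θ) * (1 - Real.cos θ) := by
      have := Real.sin_sq_add_cos_sq θ; nlinarith
    have ha : 0 < 1 + Real.cos θ := by nlinarith
    have hb : 0 < 1 - Real.cos θ := by nlinarith
    have := key_identity s (1 + Real.cos θ) (1 - Real.cos θ) (Real.sin θ) ha hb hsin hsq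
    simp only [Function.comp, f, f', g]
    have hrw : 1 - (1 - Real.cos θ) / 2 = (1 + Real.cos θ) / 2 := by ring
    rw [hrw]
    rw [show Real.cos θ - 1 = -(1 - Real.cos θ) by ring]
    linarith [this]
  calc
    ∫ θ in Set.Ioo (0 : ℝ) π,
        (1 + Real.cos θ) ^ (2 * s) * (Real.cos θ - 1) * (Real.sin θ) ^ (1 - 2 * s)
      = ∫ θ in Set.Ioo (0 : ℝ) π, (g ∘ f) θ * f' θ :=
        setIntegral_congr_fun measurableSet_Ioo hEq
    _ = ∫ θ in (0:ℝ)..π, (g ∘ f) θ * f' θ := by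
        rw [intervalIntegral.integral_of_le Real.pi_pos.le,
          MeasureTheory.integral_Ioc_eq_integral_Ioo]
    _ = ∫ u in (f 0)..(f π), g u :=
        intervalIntegral.integral_comp_mul_deriv hderiv hf'_cont hg_cont
    _ = ∫ u in (0:ℝ)..1, g u := by
        rw [show f 0 = 0 by norm_num [f], show f π = 1 by norm_num [f, Real.cos_pi]]
    _ = -4 * ∫ t in (0:ℝ)..1, t ^ (1 - s) * (1 - t) ^ s := by
        rw [← intervalIntegral.integral_const_mul]
    _ = -(2 * π * s * (1 - s) / Real.sin (π * s)) := by
        rw [beta_val s hs hs1]; ring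
end

section
/- For $s\in(0,1)$, the integral $\int_0^\pi \cos\theta\,(1+\cos\theta)^{2s}(\sin\theta)^{1-2s}\,d\theta$ equals $\frac{2\pi s^2}{\sin(\pi s)}$. -/
open MeasureTheory Real

lemma beta_int (a b : ℝ) (ha : 0 < a) (hb : 0 < b) :
    ∫ t in (0:ℝ)..1, t ^ (a-1) * (1-t) ^ (b-1) =
      Real.Gamma a * Real.Gamma b / Real.Gamma (a+b) := by
  have h1 : Complex.betaIntegral a b = ((∫ t in (0:ℝ)..1, t ^ (a-1) * (1-t) ^ (b-1) : ℝ) : ℂ) := by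
    rw [Complex.betaIntegral, ← intervalIntegral.integral_ofReal]
    refine intervalIntegral.integral_congr fun x hx => ?_
    rw [Set.uIcc_of_le (by norm_num : (0:ℝ) ≤ 1)] at hx
    rw [Complex.ofReal_mul, Complex.ofReal_cpow hx.1,
      Complex.ofReal_cpow (by linarith [hx.2] : (0:ℝ) ≤ 1 - x)]
    push_cast
    ring
  have h2 := Complex.Gamma_mul_Gamma_eq_betaIntegral
    (by simpa using ha : 0 < Complex.re a) (by simpa using hb : 0 < Complex.re b)
  rw [h1] at h2
  have h3 : Real.Gamma (a+b) ≠ 0 := (Real.Gamma_pos_of_pos (by linarith)).ne'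
  have := congrArg Complex.re h2
  simp only [← Complex.ofReal_add, Complex.Gamma_ofReal, ← Complex.ofReal_mul,
    Complex.ofReal_re] at this
  field_simp
  linarith [this]

lemma beta_integrable (a b : ℝ) (ha : 0 < a) (hb : 0 < b) :
    IntervalIntegrable (fun t : ℝ => t ^ (a-1) * (1-t) ^ (b-1)) volume 0 1 := by
  have h := Complex.betaIntegral_convergent
    (by simpa using ha : 0 < Complex.re a) (by simpa using hb : 0 < Complex.re b)
  rw [intervalIntegrable_iff] at h ⊢
  rw [Set.uIoc_of_le (by norm_num : (0:ℝ) ≤ 1)] at h ⊢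
  have h2 : IntegrableOn
      (fun x : ℝ => (((x:ℂ) ^ ((a:ℂ)-1) * (1-(x:ℂ)) ^ ((b:ℂ)-1)).re)) (Set.Ioc 0 1) := h.re
  refine h2.congr_fun (fun x hx => ?_) measurableSet_Ioc
  beta_reduce
  rw [show ((a:ℂ)-1) = ((a-1:ℝ):ℂ) by push_cast; ring,
    show ((b:ℂ)-1) = ((b-1:ℝ):ℂ) by push_cast; ring,
    show ((1:ℂ) - (x:ℂ)) = ((1-x:ℝ):ℂ) by push_cast; ring,
    ← Complex.ofReal_cpow hx.1.le,
    ← Complex.ofReal_cpow (by linarith [hx.2] : (0:ℝ) ≤ 1 - x),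
    ← Complex.ofReal_mul, Complex.ofReal_re]

/-- For `s ∈ (0,1)`,
`∫_0^π cos θ (1+cos θ)^{2s} (sin θ)^{1-2s} dθ = 2π s²/sin(πs)`. -/
theorem stmt_10 (s : ℝ) (hs : 0 < s) (hs1 : s < 1) :
    ∫ θ in Set.Ioo (0 : ℝ) π,
        Real.cos θ * (1 + Real.cos θ) ^ (2 * s) * (Real.sin θ) ^ (1 - 2 * s) =
      2 * π * s ^ 2 / Real.sin (π * s) := by
  have hpi := Real.pi_pos
  set G : ℝ → ℝ := fun u => u * (1+u) ^ s * (1-u) ^ (-s) with hG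
  -- Step 1: substitute u = cos θ
  have himg : Real.cos '' Set.Ioo 0 π = Set.Ioo (-1 : ℝ) 1 := by
    ext y
    constructor
    · rintro ⟨θ, hθ, rfl⟩
      have h1 : Real.cos θ < Real.cos 0 :=
        Real.strictAntiOn_cos ⟨le_rfl, hpi.le⟩ ⟨hθ.1.le, hθ.2.le⟩ hθ.1
      have h2 : Real.cos π < Real.cos θ :=
        Real.strictAntiOn_cos ⟨hθ.1.le, hθ.2.le⟩ ⟨hpi.le, le_rfl⟩ hθ.2
      rw [Real.cos_zero] at h1
      rw [Real.cos_pi] at h2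
      exact ⟨h2, h1⟩
    · intro hy
      have hlt : Real.arccos y < π := by
        rcases (Real.arccos_le_pi y).lt_or_eq with h | h
        · exact h
        · exfalso
          have hc := Real.cos_arccos hy.1.le hy.2.le
          rw [h, Real.cos_pi] at hc
          linarith [hy.1]
      exact ⟨Real.arccos y, ⟨Real.arccos_pos.2 hy.2, hlt⟩,
        Real.cos_arccos hy.1.le hy.2.le⟩
  have key1 : ∫ u in Set.Ioo (-1 : ℝ) 1, G u
      = ∫ θ in Set.Ioo (0:ℝ) π, |(-Real.sin θ)| • G (Real.cos θ) := by
    rw [← himg]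
    exact integral_image_eq_integral_abs_deriv_smul measurableSet_Ioo
      (fun θ _ => (Real.hasDerivAt_cos θ).hasDerivWithinAt)
      (Real.injOn_cos.mono Set.Ioo_subset_Icc_self) G
  have step1 : ∫ θ in Set.Ioo (0 : ℝ) π,
        Real.cos θ * (1 + Real.cos θ) ^ (2 * s) * (Real.sin θ) ^ (1 - 2 * s)
      = ∫ u in Set.Ioo (-1 : ℝ) 1, G u := by
    rw [key1]
    refine setIntegral_congr_fun measurableSet_Ioo (fun θ hθ => ?_)
    have hsin : 0 < Real.sin θ := Real.sin_pos_of_pos_of_lt_pi hθ.1 hθ.2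
    have hmem : Real.cos θ ∈ Set.Ioo (-1 : ℝ) 1 := by
      rw [← himg]; exact Set.mem_image_of_mem _ hθ
    have hc1 : -1 < Real.cos θ := hmem.1
    have hc2 : Real.cos θ < 1 := hmem.2
    have h1p : (0:ℝ) < 1 + Real.cos θ := by linarith
    have h1m : (0:ℝ) < 1 - Real.cos θ := by linarith
    have hsq : Real.sin θ ^ (-(2*s)) = (1 - Real.cos θ) ^ (-s) * (1 + Real.cos θ) ^ (-s) := by
      have e1 : Real.sin θ ^ (-(2*s)) = (Real.sin θ ^ (2:ℕ)) ^ (-s) := by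
        rw [← Real.rpow_natCast (Real.sin θ) 2, ← Real.rpow_mul hsin.le]
        congr 1
        push_cast
        ring
      rw [e1, show Real.sin θ ^ (2:ℕ) = (1 - Real.cos θ) * (1 + Real.cos θ) by
        have := Real.sin_sq_add_cos_sq θ; nlinarith,
        Real.mul_rpow h1m.le h1p.le]
    have hsplit : Real.sin θ ^ (1 - 2*s) = Real.sin θ * Real.sin θ ^ (-(2*s)) := by
      rw [show (1 : ℝ) - 2*s = 1 + (-(2*s)) by ring, Real.rpow_add hsin,
        Real.rpow_one]
    rw [smul_eq_mul, abs_of_nonpos (by linarith), neg_neg, hG]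
    simp only []
    rw [hsplit, hsq, show (2:ℝ)*s = s + s by ring, Real.rpow_add h1p]
    have hcancel : (1 + Real.cos θ) ^ s * (1 + Real.cos θ) ^ (-s) = 1 := by
      rw [← Real.rpow_add h1p]; simp
    linear_combination (Real.cos θ * Real.sin θ * (1 + Real.cos θ) ^ s *
      (1 - Real.cos θ) ^ (-s)) * hcancel
  -- Step 2: substitute u = 2t - 1
  have himg2 : (fun t : ℝ => 2*t - 1) '' Set.Ioo 0 1 = Set.Ioo (-1:ℝ) 1 := by
    ext y
    simp only [Set.mem_image, Set.mem_Ioo]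
    constructor
    · rintro ⟨t, ⟨h1, h2⟩, rfl⟩
      constructor <;> linarith
    · rintro ⟨h1, h2⟩
      exact ⟨(y+1)/2, ⟨by linarith, by linarith⟩, by ring⟩
  have key2 : ∫ u in Set.Ioo (-1:ℝ) 1, G u
      = ∫ t in Set.Ioo (0:ℝ) 1, |(2:ℝ)| • G (2*t - 1) := by
    rw [← himg2]
    exact integral_image_eq_integral_abs_deriv_smul measurableSet_Ioo
      (fun t _ => by
        simpa using (((hasDerivAt_id t).const_mul (2:ℝ)).sub_const 1).hasDerivWithinAt)
      (fun a _ b _ h => by linarith [h]) G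
  have step2 : ∫ t in Set.Ioo (0:ℝ) 1, |(2:ℝ)| • G (2*t - 1)
      = ∫ t in Set.Ioo (0:ℝ) 1,
          (4 * (t ^ (s+1) * (1-t) ^ (-s)) - 2 * (t ^ s * (1-t) ^ (-s))) := by
    refine setIntegral_congr_fun measurableSet_Ioo (fun t ht => ?_)
    have ht0 : (0:ℝ) < t := ht.1
    have ht1 : (0:ℝ) < 1 - t := by linarith [ht.2]
    rw [smul_eq_mul, abs_of_nonneg (by norm_num : (0:ℝ) ≤ 2), hG]
    simp only []
    rw [show (1 : ℝ) + (2*t - 1) = 2 * t by ring, show (1 : ℝ) - (2*t - 1) = 2 * (1-t) by ring,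
      Real.mul_rpow (by norm_num) ht0.le, Real.mul_rpow (by norm_num) ht1.le]
    have hcanc : (2:ℝ) ^ s * (2:ℝ) ^ (-s) = 1 := by
      rw [← Real.rpow_add (by norm_num : (0:ℝ) < 2)]; simp
    have htp : t ^ (s+1) = t ^ s * t := by
      rw [Real.rpow_add ht0, Real.rpow_one]
    rw [htp]
    linear_combination (2 * (2*t-1) * t ^ s * (1-t) ^ (-s)) * hcanc
  -- Beta values
  have hB1 : ∫ t in (0:ℝ)..1, t ^ (s+1) * (1-t) ^ (-s)
      = Real.Gamma (s+2) * Real.Gamma (1-s) / Real.Gamma 3 := by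
    have h := beta_int (s+2) (1-s) (by linarith) (by linarith)
    simp only [show s+2-1 = s+1 from by ring, show (1:ℝ)-s-1 = -s from by ring,
      show s+2+(1-s) = 3 from by ring] at h
    exact h
  have hB2 : ∫ t in (0:ℝ)..1, t ^ s * (1-t) ^ (-s)
      = Real.Gamma (s+1) * Real.Gamma (1-s) / Real.Gamma 2 := by
    have h := beta_int (s+1) (1-s) (by linarith) (by linarith)
    simp only [show s+1-1 = s from by ring, show (1:ℝ)-s-1 = -s from by ring,
      show s+1+(1-s) = 2 from by ring] at h
    exact h
  have hI1 : IntervalIntegrable (fun t : ℝ => t ^ (s+1) * (1-t) ^ (-s)) volume 0 1 := by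
    have h := beta_integrable (s+2) (1-s) (by linarith) (by linarith)
    simpa only [show s+2-1 = s+1 from by ring, show (1:ℝ)-s-1 = -s from by ring] using h
  have hI2 : IntervalIntegrable (fun t : ℝ => t ^ s * (1-t) ^ (-s)) volume 0 1 := by
    have h := beta_integrable (s+1) (1-s) (by linarith) (by linarith)
    simpa only [show s+1-1 = s from by ring, show (1:ℝ)-s-1 = -s from by ring] using h
  -- assemble
  have hIoo : ∫ t in Set.Ioo (0:ℝ) 1,
        (4 * (t ^ (s+1) * (1-t) ^ (-s)) - 2 * (t ^ s * (1-t) ^ (-s)))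
      = ∫ t in (0:ℝ)..1, (4 * (t ^ (s+1) * (1-t) ^ (-s)) - 2 * (t ^ s * (1-t) ^ (-s))) := by
    rw [intervalIntegral.integral_of_le zero_le_one, integral_Ioc_eq_integral_Ioo]
  have hsplit2 : ∫ t in (0:ℝ)..1, (4 * (t ^ (s+1) * (1-t) ^ (-s)) - 2 * (t ^ s * (1-t) ^ (-s)))
      = 4 * (Real.Gamma (s+2) * Real.Gamma (1-s) / Real.Gamma 3)
        - 2 * (Real.Gamma (s+1) * Real.Gamma (1-s) / Real.Gamma 2) := by
    rw [intervalIntegral.integral_sub (hI1.const_mul 4) (hI2.const_mul 2),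
      intervalIntegral.integral_const_mul, intervalIntegral.integral_const_mul, hB1, hB2]
  -- Gamma arithmetic
  have hG2 : Real.Gamma 2 = 1 := by
    rw [show (2:ℝ) = 1 + 1 by norm_num, Real.Gamma_add_one one_ne_zero, Real.Gamma_one, mul_one]
  have hG3 : Real.Gamma 3 = 2 := by
    rw [show (3:ℝ) = 2 + 1 by norm_num, Real.Gamma_add_one two_ne_zero, hG2, mul_one]
  have hP : Real.Gamma s * Real.Gamma (1-s) = π / Real.sin (π * s) :=
    Real.Gamma_mul_Gamma_one_sub s
  have hGs1 : Real.Gamma (s+1) = s * Real.Gamma s := Real.Gamma_add_one hs.ne'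
  have hGs2 : Real.Gamma (s+2) = (s+1) * (s * Real.Gamma s) := by
    rw [show s+2 = (s+1) + 1 by ring, Real.Gamma_add_one (by linarith), hGs1]
  have hsinpos : 0 < Real.sin (π * s) :=
    Real.sin_pos_of_pos_of_lt_pi (mul_pos hpi hs) (by nlinarith)
  rw [step1, key2, step2, hIoo, hsplit2, hG2, hG3, hGs1, hGs2]
  have hTp : Real.Gamma s * Real.Gamma (1-s) * Real.sin (π * s) = π := by
    rw [hP]
    field_simp
  rw [eq_div_iff hsinpos.ne']
  linear_combination (2 * s ^ 2) * hTp
end
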